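/- The exceptional triangle 2·conv(0, e_1, e_2) in ℤ^2 is not a Lawrence prism: it is not lattice-isomorphic to any polytope conv(e_0, e_0 + h_1(e_2−e_0), e_1, e_1 + h_2(e_2−e_0)) for nonnegative integers h_1, h_2. -/
import Mathlib


open Polynomial MeasureTheory Pointwise

noncomputable section

/-- Embed an integer lattice point into real space. -/
def ivec {n : ℕ} (x : Fin n → ℤ) : Fin n → ℝ := fun i => (x i : ℝ)

/-- Number of lattice points in a subset of `ℝ^n`. -/
def latticeCount {n : ℕ} (S : Set (Fin n → ℝ)) : ℕ :=
  Set.ncard {x : Fin n → ℤ | ivec x ∈ S}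

/-- Dimension of (the affine hull of) a subset of `ℝ^n`. -/
def polyDim {n : ℕ} (S : Set (Fin n → ℝ)) : ℕ :=
  Module.finrank ℝ (affineSpan ℝ S).direction

/-- The `i`-th coefficient of the h*-polynomial, i.e. the `i`-th coefficient of
`(1-t)^(dim+1) * ∑_k |kS ∩ ℤ^n| t^k`. -/
def hstarCoeff {n : ℕ} (S : Set (Fin n → ℝ)) (i : ℕ) : ℤ :=
  ∑ j ∈ Finset.range (i + 1),
    (-1) ^ j * ((polyDim S + 1).choose j : ℤ) *
      (latticeCount ((((i - j : ℕ) : ℝ)) • S) : ℤ)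

/-- The h*-polynomial of a lattice polytope. -/
def hstarPoly {n : ℕ} (S : Set (Fin n → ℝ)) : Polynomial ℤ :=
  ∑ i ∈ Finset.range (polyDim S + 1), Polynomial.C (hstarCoeff S i) * Polynomial.X ^ i

/-- The degree of a lattice polytope: the degree of its h*-polynomial. -/
def degPoly {n : ℕ} (S : Set (Fin n → ℝ)) : ℕ := (hstarPoly S).natDegree

/-- `S` is a lattice polytope: the convex hull of finitely many lattice points. -/
def IsLatticePolytope {n : ℕ} (S : Set (Fin n → ℝ)) : Prop :=
  ∃ V : Finset (Fin n → ℤ), V.Nonempty ∧ S = convexHull ℝ (ivec '' (V : Set (Fin n → ℤ)))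

/-- `e 0, …, e n` form an affine lattice basis of `ℤ^n`. -/
def IsAffineLatticeBasis {n : ℕ} (e : Fin (n + 1) → Fin n → ℤ) : Prop :=
  IsUnit (Matrix.det (Matrix.of fun i j : Fin n => e i.succ j - e 0 j))

namespace Stmt11Aux

lemma tri_hull :
    convexHull ℝ {![(0 : ℝ), 0], ![2, 0], ![0, 2]} =
      {p : Fin 2 → ℝ | 0 ≤ p 0 ∧ 0 ≤ p 1 ∧ p 0 + p 1 ≤ 2} := by
  apply le_antisymm
  · apply convexHull_min
    · rintro p (rfl | rfl | rfl) <;> norm_num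
    · rintro p ⟨hp0, hp1, hp2⟩ q ⟨hq0, hq1, hq2⟩ a b ha hb hab
      refine ⟨?_, ?_, ?_⟩ <;> simp only [Pi.add_apply, Pi.smul_apply, smul_eq_mul] <;> nlinarith
  · rintro p ⟨h0, h1, h2⟩
    have hm : (Finset.univ : Finset (Fin 3)).centerMass
        ![1 - p 0 / 2 - p 1 / 2, p 0 / 2, p 1 / 2] ![![(0 : ℝ), 0], ![2, 0], ![0, 2]] ∈
        convexHull ℝ ({![(0 : ℝ), 0], ![2, 0], ![0, 2]} : Set (Fin 2 → ℝ)) := by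
      apply Finset.centerMass_mem_convexHull
      · intro i _; fin_cases i <;> simp <;> linarith
      · simp [Fin.sum_univ_three]; linarith
      · intro i _; fin_cases i <;> simp
    convert hm using 1
    ext i
    rw [Finset.centerMass]
    fin_cases i <;> simp [Fin.sum_univ_three] <;> ring

lemma Q_subset (h1 h2 : ℕ) :
    convexHull ℝ ({![(0:ℝ),0], ![0,(h1:ℝ)], ![1,0], ![1,(h2:ℝ)]} : Set (Fin 2 → ℝ)) ⊆
      {p : Fin 2 → ℝ | 0 ≤ p 0 ∧ p 0 ≤ 1 ∧ 0 ≤ p 1 ∧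
        p 1 ≤ (h1 : ℝ) * (1 - p 0) + (h2 : ℝ) * p 0} := by
  apply convexHull_min
  · rintro p (rfl | rfl | rfl | rfl) <;>
        simp only [Set.mem_setOf_eq, Matrix.cons_val_zero, Matrix.cons_val_one,
          Matrix.head_cons] <;>
      refine ⟨by norm_num, by norm_num, by positivity, by norm_num⟩
  · rintro p ⟨hp1, hp2, hp3, hp4⟩ q ⟨hq1, hq2, hq3, hq4⟩ a c ha hc hac
    refine ⟨?_, ?_, ?_, ?_⟩ <;>
        simp only [Set.mem_setOf_eq, Pi.add_apply, Pi.smul_apply, smul_eq_mul] <;>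
      nlinarith [mul_le_mul_of_nonneg_left hp4 ha, mul_le_mul_of_nonneg_left hq4 hc,
        mul_le_mul_of_nonneg_left hp2 ha, mul_le_mul_of_nonneg_left hq2 hc,
        mul_nonneg ha hp1, mul_nonneg hc hq1, mul_nonneg ha hp3, mul_nonneg hc hq3]

lemma col0_mem (h1 h2 : ℕ) (k : ℤ) (hk0 : 0 ≤ k) (hk : k ≤ (h1 : ℤ)) :
    ![(0:ℝ), (k:ℝ)] ∈
      convexHull ℝ ({![(0:ℝ),0], ![0,(h1:ℝ)], ![1,0], ![1,(h2:ℝ)]} : Set (Fin 2 → ℝ)) := by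
  have hg0 : ![(0:ℝ),0] ∈ convexHull ℝ
      ({![(0:ℝ),0], ![0,(h1:ℝ)], ![1,0], ![1,(h2:ℝ)]} : Set (Fin 2 → ℝ)) :=
    subset_convexHull ℝ _ (by simp)
  have hg1 : ![(0:ℝ),(h1:ℝ)] ∈ convexHull ℝ
      ({![(0:ℝ),0], ![0,(h1:ℝ)], ![1,0], ![1,(h2:ℝ)]} : Set (Fin 2 → ℝ)) :=
    subset_convexHull ℝ _ (by simp)
  rcases Nat.eq_zero_or_pos h1 with h | h
  · have : k = 0 := by omega
    subst this
    simpa using hg0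
  · have hh : (0:ℝ) < (h1:ℝ) := by exact_mod_cast h
    have hmem := (convex_convexHull ℝ _) hg0 hg1
      (a := 1 - (k:ℝ)/(h1:ℝ)) (b := (k:ℝ)/(h1:ℝ))
      (by rw [sub_nonneg, div_le_one hh]; exact_mod_cast hk)
      (by positivity) (by ring)
    convert hmem using 1
    funext i
    fin_cases i <;> simp <;> field_simp

lemma col1_mem (h1 h2 : ℕ) (k : ℤ) (hk0 : 0 ≤ k) (hk : k ≤ (h2 : ℤ)) :
    ![(1:ℝ), (k:ℝ)] ∈
      convexHull ℝ ({![(0:ℝ),0], ![0,(h1:ℝ)], ![1,0], ![1,(h2:ℝ)]} : Set (Fin 2 → ℝ)) := by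
  have hg0 : ![(1:ℝ),0] ∈ convexHull ℝ
      ({![(0:ℝ),0], ![0,(h1:ℝ)], ![1,0], ![1,(h2:ℝ)]} : Set (Fin 2 → ℝ)) :=
    subset_convexHull ℝ _ (by simp)
  have hg1 : ![(1:ℝ),(h2:ℝ)] ∈ convexHull ℝ
      ({![(0:ℝ),0], ![0,(h1:ℝ)], ![1,0], ![1,(h2:ℝ)]} : Set (Fin 2 → ℝ)) :=
    subset_convexHull ℝ _ (by simp)
  rcases Nat.eq_zero_or_pos h2 with h | h
  · have : k = 0 := by omega
    subst this
    simpa using hg0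
  · have hh : (0:ℝ) < (h2:ℝ) := by exact_mod_cast h
    have hmem := (convex_convexHull ℝ _) hg0 hg1
      (a := 1 - (k:ℝ)/(h2:ℝ)) (b := (k:ℝ)/(h2:ℝ))
      (by rw [sub_nonneg, div_le_one hh]; exact_mod_cast hk)
      (by positivity) (by ring)
    convert hmem using 1
    funext i
    fin_cases i <;> simp <;> field_simp

def psiAff (u v c : Fin 2 → ℝ) : (Fin 2 → ℝ) →ᵃ[ℝ] (Fin 2 → ℝ) where
  toFun q := fun i => u i * q 0 + v i * q 1 + c i
  linear :=
    { toFun := fun q => fun i => u i * q 0 + v i * q 1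
      map_add' := by intro q r; funext i; simp only [Pi.add_apply]; ring
      map_smul' := by intro m q; funext i; simp only [Pi.smul_apply, smul_eq_mul,
        RingHom.id_apply]; ring }
  map_vadd' := by
    intro p w; funext i
    simp only [vadd_eq_add, Pi.add_apply, LinearMap.coe_mk, AddHom.coe_mk]
    ring

@[simp] lemma psiAff_apply (u v c : Fin 2 → ℝ) (q : Fin 2 → ℝ) (i : Fin 2) :
    psiAff u v c q i = u i * q 0 + v i * q 1 + c i := rfl

lemma psiAff_inj (u v c : Fin 2 → ℝ)
    (h : (u 0 * v 1 - u 1 * v 0) * (u 0 * v 1 - u 1 * v 0) = 1) :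
    Function.Injective (psiAff u v c) := by
  intro a b hab
  have E0 := congrFun hab 0
  have E1 := congrFun hab 1
  simp only [psiAff_apply] at E0 E1
  funext i
  fin_cases i
  · show a 0 = b 0
    linear_combination ((u 0 * v 1 - u 1 * v 0) * v 1) * E0
      - ((u 0 * v 1 - u 1 * v 0) * v 0) * E1 - (a 0 - b 0) * h
  · show a 1 = b 1
    linear_combination ((u 0 * v 1 - u 1 * v 0) * u 0) * E1
      - ((u 0 * v 1 - u 1 * v 0) * u 1) * E0 - (a 1 - b 1) * h

variable (A : Matrix (Fin 2) (Fin 2) ℤ) (b : Fin 2 → ℤ) (e : Fin 3 → Fin 2 → ℤ)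

def uu : Fin 2 → ℤ := fun i => e 1 i - e 0 i
def vv : Fin 2 → ℤ := fun i => e 2 i - e 0 i

def fz (x : Fin 2 → ℤ) : Fin 2 → ℤ :=
  ![A 0 0 * x 0 + A 0 1 * x 1 + b 0, A 1 0 * x 0 + A 1 1 * x 1 + b 1]

def pz (q : Fin 2 → ℤ) : Fin 2 → ℤ := fun i => uu e i * q 0 + vv e i * q 1 + e 0 i

def chi (x : Fin 2 → ℤ) : Fin 2 → ℤ :=
  ![(uu e 0 * vv e 1 - uu e 1 * vv e 0) *
      (vv e 1 * (fz A b x 0 - e 0 0) - vv e 0 * (fz A b x 1 - e 0 1)),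
    (uu e 0 * vv e 1 - uu e 1 * vv e 0) *
      (uu e 0 * (fz A b x 1 - e 0 1) - uu e 1 * (fz A b x 0 - e 0 0))]

def mu (c : Fin 2 → ℤ) : Fin 2 → ℤ :=
  ![(A 0 0 * A 1 1 - A 0 1 * A 1 0) * (A 1 1 * (pz e c 0 - b 0) - A 0 1 * (pz e c 1 - b 1)),
    (A 0 0 * A 1 1 - A 0 1 * A 1 0) * (A 0 0 * (pz e c 1 - b 1) - A 1 0 * (pz e c 0 - b 0))]

lemma chi_inv
    (hDD : (uu e 0 * vv e 1 - uu e 1 * vv e 0) * (uu e 0 * vv e 1 - uu e 1 * vv e 0) = 1)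
    (x : Fin 2 → ℤ) :
    pz e (chi A b e x) = fz A b x := by
  funext i
  fin_cases i
  · show uu e 0 * chi A b e x 0 + vv e 0 * chi A b e x 1 + e 0 0 = fz A b x 0
    simp only [chi, Matrix.cons_val_zero, Matrix.cons_val_one, Matrix.head_cons]
    linear_combination (fz A b x 0 - e 0 0) * hDD
  · show uu e 1 * chi A b e x 0 + vv e 1 * chi A b e x 1 + e 0 1 = fz A b x 1
    simp only [chi, Matrix.cons_val_zero, Matrix.cons_val_one, Matrix.head_cons]
    linear_combination (fz A b x 1 - e 0 1) * hDD

lemma f_mu (hdd : (A 0 0 * A 1 1 - A 0 1 * A 1 0) * (A 0 0 * A 1 1 - A 0 1 * A 1 0) = 1)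
    (c : Fin 2 → ℤ) :
    fz A b (mu A b e c) = pz e c := by
  funext i
  fin_cases i
  · show A 0 0 * mu A b e c 0 + A 0 1 * mu A b e c 1 + b 0 = pz e c 0
    simp only [mu, Matrix.cons_val_zero, Matrix.cons_val_one, Matrix.head_cons]
    linear_combination (pz e c 0 - b 0) * hdd
  · show A 1 0 * mu A b e c 0 + A 1 1 * mu A b e c 1 + b 1 = pz e c 1
    simp only [mu, Matrix.cons_val_zero, Matrix.cons_val_one, Matrix.head_cons]
    linear_combination (pz e c 1 - b 1) * hdd

lemma chi_of_fz_eq_pz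
    (hDD : (uu e 0 * vv e 1 - uu e 1 * vv e 0) * (uu e 0 * vv e 1 - uu e 1 * vv e 0) = 1)
    {x c : Fin 2 → ℤ}
    (h : fz A b x = pz e c) : chi A b e x = c := by
  have E0 := congrFun h 0
  have E1 := congrFun h 1
  simp only [pz] at E0 E1
  funext i
  fin_cases i
  · show (uu e 0 * vv e 1 - uu e 1 * vv e 0) *
      (vv e 1 * (fz A b x 0 - e 0 0) - vv e 0 * (fz A b x 1 - e 0 1)) = c 0
    linear_combination ((uu e 0 * vv e 1 - uu e 1 * vv e 0) * vv e 1) * E0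
      - ((uu e 0 * vv e 1 - uu e 1 * vv e 0) * vv e 0) * E1 + c 0 * hDD
  · show (uu e 0 * vv e 1 - uu e 1 * vv e 0) *
      (uu e 0 * (fz A b x 1 - e 0 1) - uu e 1 * (fz A b x 0 - e 0 0)) = c 1
    linear_combination ((uu e 0 * vv e 1 - uu e 1 * vv e 0) * uu e 0) * E1
      - ((uu e 0 * vv e 1 - uu e 1 * vv e 0) * uu e 1) * E0 + c 1 * hDD

lemma fz_inj (hdd : (A 0 0 * A 1 1 - A 0 1 * A 1 0) * (A 0 0 * A 1 1 - A 0 1 * A 1 0) = 1)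
    {x y : Fin 2 → ℤ} (h : fz A b x = fz A b y) :
    x = y := by
  have E0 := congrFun h 0
  have E1 := congrFun h 1
  simp only [fz, Matrix.cons_val_zero, Matrix.cons_val_one, Matrix.head_cons] at E0 E1
  funext i
  fin_cases i
  · show x 0 = y 0
    linear_combination ((A 0 0 * A 1 1 - A 0 1 * A 1 0) * A 1 1) * E0
      - ((A 0 0 * A 1 1 - A 0 1 * A 1 0) * A 0 1) * E1 - (x 0 - y 0) * hdd
  · show x 1 = y 1
    linear_combination ((A 0 0 * A 1 1 - A 0 1 * A 1 0) * A 0 0) * E1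
      - ((A 0 0 * A 1 1 - A 0 1 * A 1 0) * A 1 0) * E0 - (x 1 - y 1) * hdd

lemma chi_inj (hdd : (A 0 0 * A 1 1 - A 0 1 * A 1 0) * (A 0 0 * A 1 1 - A 0 1 * A 1 0) = 1)
    (hDD : (uu e 0 * vv e 1 - uu e 1 * vv e 0) * (uu e 0 * vv e 1 - uu e 1 * vv e 0) = 1)
    {x y : Fin 2 → ℤ} (h : chi A b e x = chi A b e y) : x = y := by
  apply fz_inj A b hdd
  rw [← chi_inv A b e hDD x, ← chi_inv A b e hDD y, h]

lemma chi_mu (hdd : (A 0 0 * A 1 1 - A 0 1 * A 1 0) * (A 0 0 * A 1 1 - A 0 1 * A 1 0) = 1)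
    (hDD : (uu e 0 * vv e 1 - uu e 1 * vv e 0) * (uu e 0 * vv e 1 - uu e 1 * vv e 0) = 1)
    (c : Fin 2 → ℤ) :
    chi A b e (mu A b e c) = c :=
  chi_of_fz_eq_pz A b e hDD (f_mu A b e hdd c)

lemma mu_chi (hdd : (A 0 0 * A 1 1 - A 0 1 * A 1 0) * (A 0 0 * A 1 1 - A 0 1 * A 1 0) = 1)
    (hDD : (uu e 0 * vv e 1 - uu e 1 * vv e 0) * (uu e 0 * vv e 1 - uu e 1 * vv e 0) = 1)
    (x : Fin 2 → ℤ) :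
    mu A b e (chi A b e x) = x := by
  apply fz_inj A b hdd
  rw [f_mu A b e hdd, chi_inv A b e hDD]

/-- parity is preserved forward by chi -/
lemma parity_chi {x y : Fin 2 → ℤ} (h0 : 2 ∣ x 0 - y 0) (h1 : 2 ∣ x 1 - y 1) :
    2 ∣ chi A b e x 0 - chi A b e y 0 ∧ 2 ∣ chi A b e x 1 - chi A b e y 1 := by
  obtain ⟨a, ha⟩ := h0
  obtain ⟨c, hc⟩ := h1
  constructor
  · refine ⟨(uu e 0 * vv e 1 - uu e 1 * vv e 0) * (vv e 1 * A 0 0 - vv e 0 * A 1 0) * a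
      + (uu e 0 * vv e 1 - uu e 1 * vv e 0) * (vv e 1 * A 0 1 - vv e 0 * A 1 1) * c, ?_⟩
    simp only [chi, fz, Matrix.cons_val_zero, Matrix.cons_val_one, Matrix.head_cons]
    linear_combination ((uu e 0 * vv e 1 - uu e 1 * vv e 0) *
        (vv e 1 * A 0 0 - vv e 0 * A 1 0)) * ha
      + ((uu e 0 * vv e 1 - uu e 1 * vv e 0) * (vv e 1 * A 0 1 - vv e 0 * A 1 1)) * hc
  · refine ⟨(uu e 0 * vv e 1 - uu e 1 * vv e 0) * (uu e 0 * A 1 0 - uu e 1 * A 0 0) * a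
      + (uu e 0 * vv e 1 - uu e 1 * vv e 0) * (uu e 0 * A 1 1 - uu e 1 * A 0 1) * c, ?_⟩
    simp only [chi, fz, Matrix.cons_val_zero, Matrix.cons_val_one, Matrix.head_cons]
    linear_combination ((uu e 0 * vv e 1 - uu e 1 * vv e 0) *
        (uu e 0 * A 1 0 - uu e 1 * A 0 0)) * ha
      + ((uu e 0 * vv e 1 - uu e 1 * vv e 0) * (uu e 0 * A 1 1 - uu e 1 * A 0 1)) * hc

/-- parity is preserved forward by mu -/
lemma parity_mu {x y : Fin 2 → ℤ} (h0 : 2 ∣ x 0 - y 0) (h1 : 2 ∣ x 1 - y 1) :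
    2 ∣ mu A b e x 0 - mu A b e y 0 ∧ 2 ∣ mu A b e x 1 - mu A b e y 1 := by
  obtain ⟨a, ha⟩ := h0
  obtain ⟨c, hc⟩ := h1
  constructor
  · refine ⟨(A 0 0 * A 1 1 - A 0 1 * A 1 0) * (A 1 1 * uu e 0 - A 0 1 * uu e 1) * a
      + (A 0 0 * A 1 1 - A 0 1 * A 1 0) * (A 1 1 * vv e 0 - A 0 1 * vv e 1) * c, ?_⟩
    simp only [mu, pz, Matrix.cons_val_zero, Matrix.cons_val_one, Matrix.head_cons]
    linear_combination ((A 0 0 * A 1 1 - A 0 1 * A 1 0) *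
        (A 1 1 * uu e 0 - A 0 1 * uu e 1)) * ha
      + ((A 0 0 * A 1 1 - A 0 1 * A 1 0) * (A 1 1 * vv e 0 - A 0 1 * vv e 1)) * hc
  · refine ⟨(A 0 0 * A 1 1 - A 0 1 * A 1 0) * (A 0 0 * uu e 1 - A 1 0 * uu e 0) * a
      + (A 0 0 * A 1 1 - A 0 1 * A 1 0) * (A 0 0 * vv e 1 - A 1 0 * vv e 0) * c, ?_⟩
    simp only [mu, pz, Matrix.cons_val_zero, Matrix.cons_val_one, Matrix.head_cons]
    linear_combination ((A 0 0 * A 1 1 - A 0 1 * A 1 0) *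
        (A 0 0 * uu e 1 - A 1 0 * uu e 0)) * ha
      + ((A 0 0 * A 1 1 - A 0 1 * A 1 0) * (A 0 0 * vv e 1 - A 1 0 * vv e 0)) * hc

lemma freal_eq (x : Fin 2 → ℤ) :
    (A.map (fun a : ℤ => (a : ℝ))).mulVec (ivec x) + ivec b = ivec (fz A b x) := by
  funext i
  fin_cases i <;>
    · simp only [Matrix.mulVec, dotProduct, Fin.sum_univ_two, Matrix.map_apply,
        Pi.add_apply, ivec, fz, Matrix.cons_val_zero, Matrix.cons_val_one, Matrix.head_cons]
      norm_num

lemma freal_inj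
    (hdd : ((A 0 0 : ℝ) * A 1 1 - A 0 1 * A 1 0) * ((A 0 0 : ℝ) * A 1 1 - A 0 1 * A 1 0) = 1) :
    Function.Injective (fun x : Fin 2 → ℝ => (A.map (fun a : ℤ => (a : ℝ))).mulVec x + ivec b) := by
  intro x y hxy
  have E0 := congrFun hxy 0
  have E1 := congrFun hxy 1
  simp only [Matrix.mulVec, dotProduct, Fin.sum_univ_two, Matrix.map_apply,
    Pi.add_apply] at E0 E1
  funext i
  fin_cases i
  · show x 0 = y 0
    linear_combination (((A 0 0 : ℝ) * A 1 1 - A 0 1 * A 1 0) * A 1 1) * E0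
      - (((A 0 0 : ℝ) * A 1 1 - A 0 1 * A 1 0) * A 0 1) * E1 - (x 0 - y 0) * hdd
  · show x 1 = y 1
    linear_combination (((A 0 0 : ℝ) * A 1 1 - A 0 1 * A 1 0) * A 0 0) * E1
      - (((A 0 0 : ℝ) * A 1 1 - A 0 1 * A 1 0) * A 1 0) * E0 - (x 1 - y 1) * hdd

lemma psireal_eq (q : Fin 2 → ℤ) :
    psiAff (ivec (uu e)) (ivec (vv e)) (ivec (e 0)) (ivec q) = ivec (pz e q) := by
  funext i
  simp only [psiAff_apply, ivec, pz]
  push_cast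
  ring

set_option maxHeartbeats 1000000 in
lemma no_even_triple (h1 h2 : ℤ) (hs : h1 + h2 = 4) (hu1 : h1 ≤ 3) (hu2 : h2 ≤ 3)
    (a0 a1 b0 b1 c0 c1 : ℤ)
    (ha : (a0 = 0 ∧ 0 ≤ a1 ∧ a1 ≤ h1) ∨ (a0 = 1 ∧ 0 ≤ a1 ∧ a1 ≤ h2))
    (hb : (b0 = 0 ∧ 0 ≤ b1 ∧ b1 ≤ h1) ∨ (b0 = 1 ∧ 0 ≤ b1 ∧ b1 ≤ h2))
    (hc : (c0 = 0 ∧ 0 ≤ c1 ∧ c1 ≤ h1) ∨ (c0 = 1 ∧ 0 ≤ c1 ∧ c1 ≤ h2))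
    (eab : 2 ∣ a0 - b0 ∧ 2 ∣ a1 - b1) (eac : 2 ∣ a0 - c0 ∧ 2 ∣ a1 - c1)
    (ebc : 2 ∣ b0 - c0 ∧ 2 ∣ b1 - c1)
    (dab : ¬(a0 = b0 ∧ a1 = b1)) (dac : ¬(a0 = c0 ∧ a1 = c1))
    (dbc : ¬(b0 = c0 ∧ b1 = c1)) : False := by omega

set_option maxHeartbeats 1000000 in
lemma no_odd_quad (h1 h2 : ℤ) (hz : h1 = 0 ∨ h2 = 0) (hn1 : 0 ≤ h1) (hn2 : 0 ≤ h2)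
    (a0 a1 b0 b1 c0 c1 d0 d1 : ℤ)
    (ha : (a0 = 0 ∧ 0 ≤ a1 ∧ a1 ≤ h1) ∨ (a0 = 1 ∧ 0 ≤ a1 ∧ a1 ≤ h2))
    (hb : (b0 = 0 ∧ 0 ≤ b1 ∧ b1 ≤ h1) ∨ (b0 = 1 ∧ 0 ≤ b1 ∧ b1 ≤ h2))
    (hc : (c0 = 0 ∧ 0 ≤ c1 ∧ c1 ≤ h1) ∨ (c0 = 1 ∧ 0 ≤ c1 ∧ c1 ≤ h2))
    (hd : (d0 = 0 ∧ 0 ≤ d1 ∧ d1 ≤ h1) ∨ (d0 = 1 ∧ 0 ≤ d1 ∧ d1 ≤ h2))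
    (oab : ¬(2 ∣ a0 - b0 ∧ 2 ∣ a1 - b1)) (oac : ¬(2 ∣ a0 - c0 ∧ 2 ∣ a1 - c1))
    (oad : ¬(2 ∣ a0 - d0 ∧ 2 ∣ a1 - d1)) (obc : ¬(2 ∣ b0 - c0 ∧ 2 ∣ b1 - c1))
    (obd : ¬(2 ∣ b0 - d0 ∧ 2 ∣ b1 - d1)) (ocd : ¬(2 ∣ c0 - d0 ∧ 2 ∣ c1 - d1)) : False := by
  omega

end Stmt11Aux

open Stmt11Aux

set_option maxHeartbeats 1000000 in
/-- the exceptional triangle `2·conv(0, e_1, e_2)` in `ℤ^2` is not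
lattice-isomorphic to any Lawrence prism
`conv(e_0, e_0 + h_1(e_2 - e_0), e_1, e_1 + h_2(e_2 - e_0))`. -/
theorem stmt11 :
    ¬ ∃ (A : Matrix (Fin 2) (Fin 2) ℤ) (b : Fin 2 → ℤ) (h₁ h₂ : ℕ)
        (e : Fin 3 → Fin 2 → ℤ),
      IsUnit A.det ∧ IsAffineLatticeBasis e ∧
      (fun x : Fin 2 → ℝ => (A.map (fun a : ℤ => (a : ℝ))).mulVec x + ivec b) ''
          (convexHull ℝ {![(0 : ℝ), 0], ![2, 0], ![0, 2]}) =
        convexHull ℝ (ivec ''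
          {e 0, e 0 + (h₁ : ℤ) • (e 2 - e 0), e 1, e 1 + (h₂ : ℤ) • (e 2 - e 0)}) := by
  rintro ⟨A, b, h₁, h₂, e, hA, hE, H⟩
  -- determinant facts
  have hdd : (A 0 0 * A 1 1 - A 0 1 * A 1 0) * (A 0 0 * A 1 1 - A 0 1 * A 1 0) = 1 := by
    rw [Matrix.det_fin_two] at hA
    rcases Int.isUnit_iff.mp hA with h | h <;> rw [h] <;> norm_num
  have hDD : (uu e 0 * vv e 1 - uu e 1 * vv e 0) * (uu e 0 * vv e 1 - uu e 1 * vv e 0) = 1 := by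
    have hE' : IsUnit (Matrix.det (Matrix.of fun i j : Fin 2 => e i.succ j - e 0 j)) := hE
    rw [Matrix.det_fin_two] at hE'
    have h := Int.isUnit_iff.mp hE'
    simp only [Matrix.of_apply, Fin.succ_zero_eq_one, Fin.succ_one_eq_two] at h
    simp only [uu, vv]
    rcases h with h | h <;> rw [h] <;> norm_num
  have hddR : ((A 0 0 : ℝ) * A 1 1 - A 0 1 * A 1 0) *
      ((A 0 0 : ℝ) * A 1 1 - A 0 1 * A 1 0) = 1 := by exact_mod_cast hdd
  have hDDR : (ivec (uu e) 0 * ivec (vv e) 1 - ivec (uu e) 1 * ivec (vv e) 0) *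
      (ivec (uu e) 0 * ivec (vv e) 1 - ivec (uu e) 1 * ivec (vv e) 0) = 1 := by
    simp only [ivec]; exact_mod_cast hDD
  -- rewrite the right-hand side of H as an affine image
  have q0 : psiAff (ivec (uu e)) (ivec (vv e)) (ivec (e 0)) ![(0:ℝ),0] = ivec (e 0) := by
    have hp : pz e ![(0:ℤ),0] = e 0 := by
      funext i
      simp only [pz, Matrix.cons_val_zero, Matrix.cons_val_one, Matrix.head_cons]
      ring
    have h' : (![(0:ℝ),0]) = ivec ![(0:ℤ),0] := by
      funext i; fin_cases i <;> norm_num [ivec]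
    rw [h', psireal_eq, hp]
  have q1 : psiAff (ivec (uu e)) (ivec (vv e)) (ivec (e 0)) ![(0:ℝ),(h₁:ℝ)] =
      ivec (e 0 + (h₁ : ℤ) • (e 2 - e 0)) := by
    have hp : pz e ![(0:ℤ),(h₁:ℤ)] = e 0 + (h₁ : ℤ) • (e 2 - e 0) := by
      funext i
      simp only [pz, uu, vv, Matrix.cons_val_zero, Matrix.cons_val_one, Matrix.head_cons,
        Pi.add_apply, Pi.smul_apply, Pi.sub_apply, smul_eq_mul]
      ring
    have h' : (![(0:ℝ),(h₁:ℝ)]) = ivec ![(0:ℤ),(h₁:ℤ)] := by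
      funext i; fin_cases i <;> norm_num [ivec]
    rw [h', psireal_eq, hp]
  have q2 : psiAff (ivec (uu e)) (ivec (vv e)) (ivec (e 0)) ![(1:ℝ),0] = ivec (e 1) := by
    have hp : pz e ![(1:ℤ),0] = e 1 := by
      funext i
      simp only [pz, uu, vv, Matrix.cons_val_zero, Matrix.cons_val_one, Matrix.head_cons]
      ring
    have h' : (![(1:ℝ),0]) = ivec ![(1:ℤ),0] := by
      funext i; fin_cases i <;> norm_num [ivec]
    rw [h', psireal_eq, hp]
  have q3 : psiAff (ivec (uu e)) (ivec (vv e)) (ivec (e 0)) ![(1:ℝ),(h₂:ℝ)] =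
      ivec (e 1 + (h₂ : ℤ) • (e 2 - e 0)) := by
    have hp : pz e ![(1:ℤ),(h₂:ℤ)] = e 1 + (h₂ : ℤ) • (e 2 - e 0) := by
      funext i
      simp only [pz, uu, vv, Matrix.cons_val_zero, Matrix.cons_val_one, Matrix.head_cons,
        Pi.add_apply, Pi.smul_apply, Pi.sub_apply, smul_eq_mul]
      ring
    have h' : (![(1:ℝ),(h₂:ℝ)]) = ivec ![(1:ℤ),(h₂:ℤ)] := by
      funext i; fin_cases i <;> norm_num [ivec]
    rw [h', psireal_eq, hp]
  have hgen : (ivec '' ({e 0, e 0 + (h₁ : ℤ) • (e 2 - e 0), e 1,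
        e 1 + (h₂ : ℤ) • (e 2 - e 0)} : Set (Fin 2 → ℤ))) =
      psiAff (ivec (uu e)) (ivec (vv e)) (ivec (e 0)) ''
        ({![(0:ℝ),0], ![0,(h₁:ℝ)], ![1,0], ![1,(h₂:ℝ)]} : Set (Fin 2 → ℝ)) := by
    rw [Set.image_insert_eq, Set.image_insert_eq, Set.image_insert_eq, Set.image_singleton,
        Set.image_insert_eq, Set.image_insert_eq, Set.image_insert_eq, Set.image_singleton,
        q0, q1, q2, q3]
  rw [hgen, ← AffineMap.image_convexHull] at H
  -- membership transfer, forward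
  have key1 : ∀ s : Fin 2 → ℤ,
      ivec s ∈ convexHull ℝ {![(0 : ℝ), 0], ![2, 0], ![0, 2]} →
      ivec (chi A b e s) ∈
        convexHull ℝ ({![(0:ℝ),0], ![0,(h₁:ℝ)], ![1,0], ![1,(h₂:ℝ)]} : Set (Fin 2 → ℝ)) := by
    intro s hs
    have h1 : (fun x : Fin 2 → ℝ => (A.map (fun a : ℤ => (a : ℝ))).mulVec x + ivec b) (ivec s)
        ∈ psiAff (ivec (uu e)) (ivec (vv e)) (ivec (e 0)) ''
          convexHull ℝ ({![(0:ℝ),0], ![0,(h₁:ℝ)], ![1,0], ![1,(h₂:ℝ)]} : Set (Fin 2 → ℝ)) := by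
      rw [← H]; exact Set.mem_image_of_mem _ hs
    obtain ⟨q, hq, hpsiq⟩ := h1
    have h2 : psiAff (ivec (uu e)) (ivec (vv e)) (ivec (e 0)) (ivec (chi A b e s)) =
        (A.map (fun a : ℤ => (a : ℝ))).mulVec (ivec s) + ivec b := by
      rw [psireal_eq, chi_inv A b e hDD s, ← freal_eq]
    have hq' : q = ivec (chi A b e s) :=
      psiAff_inj _ _ _ hDDR (hpsiq.trans h2.symm)
    rwa [hq'] at hq
  have chiprops : ∀ s : Fin 2 → ℤ,
      ivec s ∈ convexHull ℝ {![(0 : ℝ), 0], ![2, 0], ![0, 2]} →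
      ((chi A b e s 0 = 0 ∧ 0 ≤ chi A b e s 1 ∧ chi A b e s 1 ≤ (h₁ : ℤ)) ∨
       (chi A b e s 0 = 1 ∧ 0 ≤ chi A b e s 1 ∧ chi A b e s 1 ≤ (h₂ : ℤ))) := by
    intro s hs
    obtain ⟨c1, c2, c3, c4⟩ := Q_subset h₁ h₂ (key1 s hs)
    simp only [ivec] at c1 c2 c3 c4
    have i1 : 0 ≤ chi A b e s 0 := by exact_mod_cast c1
    have i2 : chi A b e s 0 ≤ 1 := by exact_mod_cast c2
    have i3 : 0 ≤ chi A b e s 1 := by exact_mod_cast c3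
    have i4 : chi A b e s 1 ≤ (h₁ : ℤ) * (1 - chi A b e s 0) + (h₂ : ℤ) * chi A b e s 0 := by
      push_cast at c4; exact_mod_cast c4
    rcases (by omega : chi A b e s 0 = 0 ∨ chi A b e s 0 = 1) with h | h
    · left; refine ⟨h, i3, ?_⟩; rw [h] at i4; simpa using i4
    · right; refine ⟨h, i3, ?_⟩; rw [h] at i4; simpa using i4
  -- membership transfer, backward
  have muprops : ∀ c : Fin 2 → ℤ,
      ivec c ∈ convexHull ℝ ({![(0:ℝ),0], ![0,(h₁:ℝ)], ![1,0], ![1,(h₂:ℝ)]} :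
        Set (Fin 2 → ℝ)) →
      (0 ≤ mu A b e c 0 ∧ 0 ≤ mu A b e c 1 ∧ mu A b e c 0 + mu A b e c 1 ≤ 2) := by
    intro c hc
    have h1 : psiAff (ivec (uu e)) (ivec (vv e)) (ivec (e 0)) (ivec c) ∈
        (fun x : Fin 2 → ℝ => (A.map (fun a : ℤ => (a : ℝ))).mulVec x + ivec b) ''
          convexHull ℝ {![(0 : ℝ), 0], ![2, 0], ![0, 2]} := by
      rw [H]; exact Set.mem_image_of_mem _ hc
    obtain ⟨p, hp, hfp⟩ := h1
    have h2 : (A.map (fun a : ℤ => (a : ℝ))).mulVec (ivec (mu A b e c)) + ivec b =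
        psiAff (ivec (uu e)) (ivec (vv e)) (ivec (e 0)) (ivec c) := by
      rw [freal_eq, f_mu A b e hdd, ← psireal_eq]
    have hpm : p = ivec (mu A b e c) := freal_inj A b hddR (hfp.trans h2.symm)
    rw [tri_hull] at hp
    rw [hpm] at hp
    obtain ⟨c1, c2, c3⟩ := hp
    simp only [ivec] at c1 c2 c3
    refine ⟨by exact_mod_cast c1, by exact_mod_cast c2, by exact_mod_cast c3⟩
  -- 2 x 2 vector extensionality
  have vec2_eq : ∀ x y : Fin 2 → ℤ, (x 0 = y 0 ∧ x 1 = y 1) → x = y := by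
    rintro x y ⟨hu, hw⟩; funext i; fin_cases i <;> assumption
  -- the six lattice points of the triangle
  have S6_T : ∀ s ∈ ({![0,0], ![1,0], ![2,0], ![0,1], ![1,1], ![0,2]} :
      Finset (Fin 2 → ℤ)), ivec s ∈ convexHull ℝ {![(0 : ℝ), 0], ![2, 0], ![0, 2]} := by
    intro s hs
    rw [tri_hull]
    fin_cases hs <;> refine ⟨?_, ?_, ?_⟩ <;> norm_num [ivec]
  have memS6 : ∀ x : Fin 2 → ℤ, 0 ≤ x 0 → 0 ≤ x 1 → x 0 + x 1 ≤ 2 →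
      x ∈ ({![0,0], ![1,0], ![2,0], ![0,1], ![1,1], ![0,2]} : Finset (Fin 2 → ℤ)) := by
    intro x hu hw hs
    simp only [Finset.mem_insert, Finset.mem_singleton]
    rcases (by omega : (x 0 = 0 ∧ x 1 = 0) ∨ (x 0 = 1 ∧ x 1 = 0) ∨ (x 0 = 2 ∧ x 1 = 0) ∨
        (x 0 = 0 ∧ x 1 = 1) ∨ (x 0 = 1 ∧ x 1 = 1) ∨ (x 0 = 0 ∧ x 1 = 2)) with
      ⟨u1,w1⟩|⟨u1,w1⟩|⟨u1,w1⟩|⟨u1,w1⟩|⟨u1,w1⟩|⟨u1,w1⟩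
    · exact Or.inl (vec2_eq _ _ ⟨u1, w1⟩)
    · exact Or.inr (Or.inl (vec2_eq _ _ ⟨u1, w1⟩))
    · exact Or.inr (Or.inr (Or.inl (vec2_eq _ _ ⟨u1, w1⟩)))
    · exact Or.inr (Or.inr (Or.inr (Or.inl (vec2_eq _ _ ⟨u1, w1⟩))))
    · exact Or.inr (Or.inr (Or.inr (Or.inr (Or.inl (vec2_eq _ _ ⟨u1, w1⟩)))))
    · exact Or.inr (Or.inr (Or.inr (Or.inr (Or.inr (vec2_eq _ _ ⟨u1, w1⟩)))))
  -- the lattice points of the prism, as a Finset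
  have mem_colF : ∀ x : Fin 2 → ℤ,
      ((x 0 = 0 ∧ 0 ≤ x 1 ∧ x 1 ≤ (h₁:ℤ)) ∨ (x 0 = 1 ∧ 0 ≤ x 1 ∧ x 1 ≤ (h₂:ℤ))) →
      x ∈ ((Finset.range (h₁+1)).image fun k : ℕ => ![(0:ℤ),(k:ℤ)]) ∪
        ((Finset.range (h₂+1)).image fun k : ℕ => ![(1:ℤ),(k:ℤ)]) := by
    intro x h
    rcases h with ⟨h0, ha, hb⟩ | ⟨h0, ha, hb⟩
    · apply Finset.mem_union_left
      refine Finset.mem_image.mpr ⟨(x 1).toNat, Finset.mem_range.mpr (by omega), ?_⟩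
      refine vec2_eq _ _ ⟨h0.symm, by simp; omega⟩
    · apply Finset.mem_union_right
      refine Finset.mem_image.mpr ⟨(x 1).toNat, Finset.mem_range.mpr (by omega), ?_⟩
      refine vec2_eq _ _ ⟨h0.symm, by simp; omega⟩
  have colF_props : ∀ x ∈ ((Finset.range (h₁+1)).image fun k : ℕ => ![(0:ℤ),(k:ℤ)]) ∪
        ((Finset.range (h₂+1)).image fun k : ℕ => ![(1:ℤ),(k:ℤ)]),
      ((x 0 = 0 ∧ 0 ≤ x 1 ∧ x 1 ≤ (h₁:ℤ)) ∨ (x 0 = 1 ∧ 0 ≤ x 1 ∧ x 1 ≤ (h₂:ℤ))) := by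
    intro x hx
    rcases Finset.mem_union.mp hx with hx | hx <;>
      obtain ⟨k, hk, rfl⟩ := Finset.mem_image.mp hx <;>
      have hk' := Finset.mem_range.mp hk
    · left; refine ⟨rfl, by simp, by simp; omega⟩
    · right; refine ⟨rfl, by simp, by simp; omega⟩
  -- cardinalities
  have hinj0 : Function.Injective fun k : ℕ => ![(0:ℤ),(k:ℤ)] := by
    intro a c h; have := congrFun h 1; simpa using this
  have hinj1 : Function.Injective fun k : ℕ => ![(1:ℤ),(k:ℤ)] := by
    intro a c h; have := congrFun h 1; simpa using this
  have hdisj : Disjoint ((Finset.range (h₁+1)).image fun k : ℕ => ![(0:ℤ),(k:ℤ)])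
      ((Finset.range (h₂+1)).image fun k : ℕ => ![(1:ℤ),(k:ℤ)]) := by
    rw [Finset.disjoint_left]
    intro x hx0 hx1
    obtain ⟨k, _, rfl⟩ := Finset.mem_image.mp hx0
    obtain ⟨l, _, hl⟩ := Finset.mem_image.mp hx1
    have := congrFun hl 0
    simp at this
  have hcolcard : (((Finset.range (h₁+1)).image fun k : ℕ => ![(0:ℤ),(k:ℤ)]) ∪
      ((Finset.range (h₂+1)).image fun k : ℕ => ![(1:ℤ),(k:ℤ)])).card = (h₁+1) + (h₂+1) := by
    rw [Finset.card_union_of_disjoint hdisj, Finset.card_image_of_injective _ hinj0,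
      Finset.card_image_of_injective _ hinj1, Finset.card_range, Finset.card_range]
  have hS6card : ({![0,0], ![1,0], ![2,0], ![0,1], ![1,1], ![0,2]} :
      Finset (Fin 2 → ℤ)).card = 6 := by decide
  have le1 : ({![0,0], ![1,0], ![2,0], ![0,1], ![1,1], ![0,2]} :
      Finset (Fin 2 → ℤ)).card ≤ (((Finset.range (h₁+1)).image fun k : ℕ => ![(0:ℤ),(k:ℤ)]) ∪
      ((Finset.range (h₂+1)).image fun k : ℕ => ![(1:ℤ),(k:ℤ)])).card := by
    apply Finset.card_le_card_of_injOn (chi A b e)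
    · intro s hs
      exact mem_colF _ (chiprops s (S6_T s hs))
    · intro x _ y _ h
      exact chi_inj A b e hdd hDD h
  have le2 : (((Finset.range (h₁+1)).image fun k : ℕ => ![(0:ℤ),(k:ℤ)]) ∪
      ((Finset.range (h₂+1)).image fun k : ℕ => ![(1:ℤ),(k:ℤ)])).card ≤
      ({![0,0], ![1,0], ![2,0], ![0,1], ![1,1], ![0,2]} : Finset (Fin 2 → ℤ)).card := by
    apply Finset.card_le_card_of_injOn (mu A b e)
    · intro c hc
      have hQ : ivec c ∈ convexHull ℝ
          ({![(0:ℝ),0], ![0,(h₁:ℝ)], ![1,0], ![1,(h₂:ℝ)]} : Set (Fin 2 → ℝ)) := by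
        rcases colF_props c hc with ⟨h0, ha, hb⟩ | ⟨h0, ha, hb⟩
        · have hic : ivec c = ![(0:ℝ), ((c 1 : ℤ) : ℝ)] := by
            funext i; fin_cases i <;> simp [ivec, h0]
          rw [hic]; exact col0_mem h₁ h₂ (c 1) ha hb
        · have hic : ivec c = ![(1:ℝ), ((c 1 : ℤ) : ℝ)] := by
            funext i; fin_cases i <;> simp [ivec, h0]
          rw [hic]; exact col1_mem h₁ h₂ (c 1) ha hb
      obtain ⟨m1, m2, m3⟩ := muprops c hQ
      exact memS6 _ m1 m2 m3
    · intro x _ y _ h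
      rw [← chi_mu A b e hdd hDD x, ← chi_mu A b e hdd hDD y, h]
  have hsum : h₁ + h₂ = 4 := by
    rw [hS6card, hcolcard] at le1 le2
    omega
  -- images of the six triangle lattice points
  have P1 := chiprops ![0,0] (S6_T _ (by decide))
  have P2 := chiprops ![2,0] (S6_T _ (by decide))
  have P3 := chiprops ![0,2] (S6_T _ (by decide))
  have P4 := chiprops ![1,0] (S6_T _ (by decide))
  have P5 := chiprops ![0,1] (S6_T _ (by decide))
  have P6 := chiprops ![1,1] (S6_T _ (by decide))
  -- parity facts: the triple (0,0), (2,0), (0,2) has pairwise even differences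
  have E12 := parity_chi A b e (x := ![0,0]) (y := ![2,0]) (by decide) (by decide)
  have E13 := parity_chi A b e (x := ![0,0]) (y := ![0,2]) (by decide) (by decide)
  have E23 := parity_chi A b e (x := ![2,0]) (y := ![0,2]) (by decide) (by decide)
  -- the quadruple (0,0), (1,0), (0,1), (1,1) has pairwise non-even differences
  have oddpair : ∀ x y : Fin 2 → ℤ, ¬ (2 ∣ x 0 - y 0 ∧ 2 ∣ x 1 - y 1) →
      ¬ (2 ∣ chi A b e x 0 - chi A b e y 0 ∧ 2 ∣ chi A b e x 1 - chi A b e y 1) := by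
    intro x y hxy ⟨u1, u2⟩
    have h' := parity_mu A b e u1 u2
    rw [mu_chi A b e hdd hDD, mu_chi A b e hdd hDD] at h'
    exact hxy h'
  have O14 := oddpair ![0,0] ![1,0] (by decide)
  have O15 := oddpair ![0,0] ![0,1] (by decide)
  have O16 := oddpair ![0,0] ![1,1] (by decide)
  have O45 := oddpair ![1,0] ![0,1] (by decide)
  have O46 := oddpair ![1,0] ![1,1] (by decide)
  have O56 := oddpair ![0,1] ![1,1] (by decide)
  -- distinctness of the images of the triple
  have dist : ∀ x y : Fin 2 → ℤ, x ≠ y →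
      ¬ (chi A b e x 0 = chi A b e y 0 ∧ chi A b e x 1 = chi A b e y 1) := by
    intro x y hxy ⟨u, w⟩
    exact hxy (chi_inj A b e hdd hDD (vec2_eq _ _ ⟨u, w⟩))
  have D12 := dist ![0,0] ![2,0] (by intro h; exact absurd (congrFun h 0) (by decide))
  have D13 := dist ![0,0] ![0,2] (by intro h; exact absurd (congrFun h 1) (by decide))
  have D23 := dist ![2,0] ![0,2] (by intro h; exact absurd (congrFun h 0) (by decide))
  have hs' : (h₁ : ℤ) + (h₂ : ℤ) = 4 := by exact_mod_cast hsum
  rcases (by omega : ((h₁:ℤ) ≤ 3 ∧ (h₂:ℤ) ≤ 3) ∨ ((h₁:ℤ) = 0 ∨ (h₂:ℤ) = 0)) with ⟨hu1, hu2⟩ | hz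
  · exact no_even_triple _ _ hs' hu1 hu2 _ _ _ _ _ _ P1 P2 P3 E12 E13 E23 D12 D13 D23
  · exact no_odd_quad (h₁:ℤ) (h₂:ℤ) hz (Int.natCast_nonneg h₁) (Int.natCast_nonneg h₂)
      _ _ _ _ _ _ _ _ P1 P4 P5 P6 O14 O15 O16 O45 O46 O56
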